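/- Theorem 2.1 (conservation of the discrete Hamiltonian): If (u_h, w_h) is a solution of the semi-discrete DG scheme for the nonlinear biharmonic Schrödinger equation with numerical fluxes given by parameters α₁, α₂ ∈ [0,1], where in addition F : [0,∞) → ℝ is differentiable with derivative F′ and F ≥ 0, and t ↦ u_h(t), w_h(t) are continuously differentiable in t (so the second scheme equation may be differentiated in time), then the discrete Hamiltonian H_h(t) = ∫_I (|w_h(x,t)|² + F(|u_h(x,t)|²)) dx satisfies H_h(t) = H_h(0) for all t ≥ 0. -/

import Mathlib

open MeasureTheory Polynomial Set
open scoped ComplexConjugate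
set_option maxHeartbeats 1000000



noncomputable section

/-- Minus-side (left) trace of a piecewise polynomial `v` at the interface
`x_{j+1/2}` (the right endpoint of cell `I_j`).  Cells are indexed by `Fin (n+1)`
and mesh points by `Fin (n+2)`. -/
def trMinus (n : ℕ) (x : Fin (n + 2) → ℝ) (v : Fin (n + 1) → Polynomial ℂ)
    (j : Fin (n + 1)) : ℂ :=
  (v j).eval ((x j.succ : ℝ) : ℂ)

/-- Plus-side (right) trace of a piecewise polynomial `v` at the interface
`x_{j+1/2}`: the value of the polynomial of the next cell (periodically) at its left
endpoint.  For the last interface this is cell `0` at `x_a`, realizing the periodic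
identification of `x_{1/2}` and `x_{n+1/2}`. -/
def trPlus (n : ℕ) (x : Fin (n + 2) → ℝ) (v : Fin (n + 1) → Polynomial ℂ)
    (j : Fin (n + 1)) : ℂ :=
  (v (j + 1)).eval ((x (j + 1).castSucc : ℝ) : ℂ)

/-- Numerical flux `û = α₁ u_h⁺ + (1−α₁) u_h⁻` at the interface `x_{j+1/2}`. -/
def fluxUhat (n : ℕ) (x : Fin (n + 2) → ℝ) (α₁ : ℝ)
    (uh : Fin (n + 1) → Polynomial ℂ) (j : Fin (n + 1)) : ℂ :=
  (α₁ : ℂ) * trPlus n x uh j + (1 - (α₁ : ℂ)) * trMinus n x uh j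

/-- Numerical flux `w̃ₓ = (1−α₁) (w_h)ₓ⁺ + α₁ (w_h)ₓ⁻` at the interface `x_{j+1/2}`. -/
def fluxWx (n : ℕ) (x : Fin (n + 2) → ℝ) (α₁ : ℝ)
    (wh : Fin (n + 1) → Polynomial ℂ) (j : Fin (n + 1)) : ℂ :=
  (1 - (α₁ : ℂ)) * trPlus n x (fun k => (wh k).derivative) j
    + (α₁ : ℂ) * trMinus n x (fun k => (wh k).derivative) j

/-- Numerical flux `ûₓ = α₂ (u_h)ₓ⁺ + (1−α₂) (u_h)ₓ⁻` at the interface `x_{j+1/2}`. -/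
def fluxUx (n : ℕ) (x : Fin (n + 2) → ℝ) (α₂ : ℝ)
    (uh : Fin (n + 1) → Polynomial ℂ) (j : Fin (n + 1)) : ℂ :=
  (α₂ : ℂ) * trPlus n x (fun k => (uh k).derivative) j
    + (1 - (α₂ : ℂ)) * trMinus n x (fun k => (uh k).derivative) j

/-- Numerical flux `w̃ = (1−α₂) w_h⁺ + α₂ w_h⁻` at the interface `x_{j+1/2}`. -/
def fluxWtilde (n : ℕ) (x : Fin (n + 2) → ℝ) (α₂ : ℝ)
    (wh : Fin (n + 1) → Polynomial ℂ) (j : Fin (n + 1)) : ℂ :=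
  (1 - (α₂ : ℂ)) * trPlus n x wh j + (α₂ : ℂ) * trMinus n x wh j


lemma contEval (p : Polynomial ℂ) : Continuous fun y : ℝ => p.eval ((y : ℝ) : ℂ) :=
  p.continuous.comp Complex.continuous_ofReal

lemma conj_eval' (p : Polynomial ℂ) (z : ℂ) :
    (p.map (starRingEnd ℂ)).eval z = conj (p.eval (conj z)) := by
  rw [Polynomial.eval_map]
  induction p using Polynomial.induction_on' with
  | add p q hp hq => simp [hp, hq]
  | monomial n a => simp

lemma conj_eval (p : Polynomial ℂ) (y : ℝ) :
    (p.map (starRingEnd ℂ)).eval ((y:ℝ):ℂ) = conj (p.eval ((y:ℝ):ℂ)) := by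
  rw [conj_eval']; simp

lemma key_interp (q : ℕ) (f : Polynomial ℂ) (hf : f.natDegree ≤ q)
    (O : Polynomial ℂ →ₗ[ℂ] ℂ) :
    O f = ∑ i ∈ Finset.range (q+1),
      f.eval ((i : ℕ) : ℂ) • O (Lagrange.basis (Finset.range (q+1)) (Nat.cast) i) := by
  have hinj : Set.InjOn (Nat.cast : ℕ → ℂ) (Finset.range (q+1)) :=
    fun a _ b _ h => Nat.cast_injective h
  have hdeg : f.degree < (Finset.range (q+1)).card := by
    rw [Finset.card_range]
    exact lt_of_le_of_lt f.degree_le_natDegree (by exact_mod_cast Nat.lt_succ_of_le hf)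
  conv_lhs => rw [Lagrange.eq_interpolate hinj hdeg]
  rw [Lagrange.interpolate_apply, map_sum]
  refine Finset.sum_congr rfl fun i _ => ?_
  rw [← Polynomial.smul_eq_C_mul, O.map_smul]

lemma polyFTC (P : Polynomial ℂ) (a b : ℝ) :
    (∫ y in a..b, (P.derivative.eval ((y:ℝ):ℂ))) = P.eval ((b:ℝ):ℂ) - P.eval ((a:ℝ):ℂ) := by
  refine intervalIntegral.integral_eq_sub_of_hasDerivAt
    (f := fun y : ℝ => P.eval ((y:ℝ):ℂ)) (fun y _ => ?_)
    ((contEval _).intervalIntegrable _ _)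
  exact (P.hasDerivAt ((y:ℝ):ℂ)).comp_ofReal

lemma master_hasDeriv (q : ℕ) (p pt : ℝ → Polynomial ℂ)
    (hdeg : ∀ s : ℝ, 0 ≤ s → (p s).natDegree ≤ q)
    (hdegt : ∀ s : ℝ, 0 ≤ s → (pt s).natDegree ≤ q)
    (hd : ∀ s : ℝ, 0 ≤ s → ∀ y : ℝ, HasDerivWithinAt (fun r : ℝ => (p r).eval ((y:ℝ):ℂ))
      ((pt s).eval ((y:ℝ):ℂ)) (Set.Ici 0) s)
    (O : Polynomial ℂ →ₗ[ℂ] ℂ) (t : ℝ) (ht : 0 ≤ t) :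
    HasDerivWithinAt (fun s => O (p s)) (O (pt t)) (Set.Ici 0) t := by
  set c : ℕ → ℂ := fun i => O (Lagrange.basis (Finset.range (q+1)) (Nat.cast) i) with hc
  have hg : HasDerivWithinAt
      (fun s => ∑ i ∈ Finset.range (q+1), (p s).eval ((i:ℕ):ℂ) • c i)
      (∑ i ∈ Finset.range (q+1), (pt t).eval ((i:ℕ):ℂ) • c i) (Set.Ici 0) t := by
    refine HasDerivWithinAt.fun_sum fun i _ => ?_
    have h1 := hd t ht (i : ℝ)
    simp only [Complex.ofReal_natCast] at h1
    simpa [smul_eq_mul] using h1.mul_const (c i)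
  have e1 := key_interp q (pt t) (hdegt t ht) O
  rw [e1]
  exact hg.congr (fun s hs => key_interp q (p s) (hdeg s hs) O)
    (key_interp q (p t) (hdeg t ht) O)

lemma master_cont (q : ℕ) (pt : ℝ → Polynomial ℂ)
    (hdegt : ∀ s : ℝ, 0 ≤ s → (pt s).natDegree ≤ q)
    (hcont : ∀ y : ℝ, ContinuousOn (fun s : ℝ => (pt s).eval ((y:ℝ):ℂ)) (Set.Ici 0))
    (O : Polynomial ℂ →ₗ[ℂ] ℂ) :
    ContinuousOn (fun s => O (pt s)) (Set.Ici 0) := by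
  have hg : ContinuousOn (fun s => ∑ i ∈ Finset.range (q+1),
      (pt s).eval ((i:ℕ):ℂ) • O (Lagrange.basis (Finset.range (q+1)) (Nat.cast) i))
      (Set.Ici 0) := by
    refine continuousOn_finset_sum _ fun i _ => ?_
    have h1 := hcont (i : ℝ)
    simp only [Complex.ofReal_natCast] at h1
    exact h1.smul continuousOn_const
  exact hg.congr (fun s hs => key_interp q (pt s) (hdegt s hs) O)

lemma master_jointcont (q : ℕ) (pt : ℝ → Polynomial ℂ)
    (hdegt : ∀ s : ℝ, 0 ≤ s → (pt s).natDegree ≤ q)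
    (hcont : ∀ y : ℝ, ContinuousOn (fun s : ℝ => (pt s).eval ((y:ℝ):ℂ)) (Set.Ici 0)) :
    ContinuousOn (fun z : ℝ × ℝ => (pt z.1).eval ((z.2:ℝ):ℂ))
      ((Set.Ici 0) ×ˢ (Set.univ : Set ℝ)) := by
  have hg : ContinuousOn (fun z : ℝ × ℝ => ∑ i ∈ Finset.range (q+1),
      (pt z.1).eval ((i:ℕ):ℂ) •
        (Lagrange.basis (Finset.range (q+1)) (Nat.cast) i).eval ((z.2:ℝ):ℂ))
      ((Set.Ici 0) ×ˢ (Set.univ : Set ℝ)) := by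
    refine continuousOn_finset_sum _ fun i _ => ContinuousOn.smul
      (f := fun z : ℝ × ℝ => (pt z.1).eval ((i:ℕ):ℂ))
      (g := fun z : ℝ × ℝ => (Lagrange.basis (Finset.range (q+1)) (Nat.cast) i).eval ((z.2:ℝ):ℂ)) ?_ ?_
    · have h1 := hcont (i : ℝ)
      simp only [Complex.ofReal_natCast] at h1
      exact h1.comp continuousOn_fst (fun z hz => hz.1)
    · exact ((contEval _).comp continuous_snd).continuousOn
  exact hg.congr fun z hz => key_interp q (pt z.1) (hdegt z.1 hz.1) (Polynomial.leval _)

/-- The linear functional `p ↦ ∫_a^b p(y) ψ(y) dy`. -/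
def intLM (a b : ℝ) (ψ : Polynomial ℂ) : Polynomial ℂ →ₗ[ℂ] ℂ where
  toFun p := ∫ y in a..b, p.eval ((y:ℝ):ℂ) * ψ.eval ((y:ℝ):ℂ)
  map_add' p r := by
    simp only [Polynomial.eval_add, add_mul]
    exact intervalIntegral.integral_add
      (((contEval p).mul (contEval ψ)).intervalIntegrable _ _)
      (((contEval r).mul (contEval ψ)).intervalIntegrable _ _)
  map_smul' cc p := by
    simp only [Polynomial.eval_smul, smul_eq_mul, mul_assoc, RingHom.id_apply]
    simp_rw [← smul_eq_mul (a := cc)]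
    exact intervalIntegral.integral_smul cc _

lemma intLM_apply (a b : ℝ) (ψ p : Polynomial ℂ) :
    intLM a b ψ p = ∫ y in a..b, p.eval ((y:ℝ):ℂ) * ψ.eval ((y:ℝ):ℂ) := rfl

lemma polyIBP (w m : Polynomial ℂ) (a b : ℝ) :
    (∫ y in a..b, w.eval ((y:ℝ):ℂ) * (m.derivative.derivative).eval ((y:ℝ):ℂ))
      = (∫ y in a..b, (w.derivative.derivative).eval ((y:ℝ):ℂ) * m.eval ((y:ℝ):ℂ))
        + ((w.eval ((b:ℝ):ℂ) * m.derivative.eval ((b:ℝ):ℂ)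
            - w.derivative.eval ((b:ℝ):ℂ) * m.eval ((b:ℝ):ℂ))
          - (w.eval ((a:ℝ):ℂ) * m.derivative.eval ((a:ℝ):ℂ)
            - w.derivative.eval ((a:ℝ):ℂ) * m.eval ((a:ℝ):ℂ))) := by
  have h := polyFTC (w * m.derivative - w.derivative * m) a b
  have hder : (w * m.derivative - w.derivative * m).derivative
      = w * m.derivative.derivative - w.derivative.derivative * m := by
    simp only [Polynomial.derivative_sub, Polynomial.derivative_mul]
    ring
  rw [hder] at h
  have hsplit : (∫ y in a..b, (w * m.derivative.derivative
        - w.derivative.derivative * m).eval ((y:ℝ):ℂ))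
      = (∫ y in a..b, w.eval ((y:ℝ):ℂ) * (m.derivative.derivative).eval ((y:ℝ):ℂ))
        - ∫ y in a..b, (w.derivative.derivative).eval ((y:ℝ):ℂ) * m.eval ((y:ℝ):ℂ) := by
    simp only [Polynomial.eval_sub, Polynomial.eval_mul]
    exact intervalIntegral.integral_sub
      (((contEval w).mul (contEval _)).intervalIntegrable _ _)
      (((contEval _).mul (contEval m)).intervalIntegrable _ _)
  rw [hsplit] at h
  simp only [Polynomial.eval_sub, Polynomial.eval_mul] at h
  linear_combination h

lemma interface_cancel (α₁ α₂ : ℝ) (A a B b W v X ξ : ℂ) :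
    ( ((1-(α₁:ℂ))*X + (α₁:ℂ)*ξ) * (conj A - conj a)
    + ((1-(α₂:ℂ))*W + (α₂:ℂ)*v) * (conj b - conj B)
    + ((α₂:ℂ)*B + (1-(α₂:ℂ))*b) * (conj v - conj W)
    - ((α₁:ℂ)*A + (1-(α₁:ℂ))*a) * (conj ξ - conj X)
    - v * conj b + ξ * conj a + W * conj B - X * conj A ).re = 0 := by
  set T : ℂ := ((1-(α₁:ℂ))*X + (α₁:ℂ)*ξ) * (conj A - conj a)
    + ((1-(α₂:ℂ))*W + (α₂:ℂ)*v) * (conj b - conj B)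
    + ((α₂:ℂ)*B + (1-(α₂:ℂ))*b) * (conj v - conj W)
    - ((α₁:ℂ)*A + (1-(α₁:ℂ))*a) * (conj ξ - conj X)
    - v * conj b + ξ * conj a + W * conj B - X * conj A with hT
  have h : T + conj T = 0 := by
    rw [hT]
    simp only [map_add, map_sub, map_mul, map_one, Complex.conj_conj, Complex.conj_ofReal]
    ring
  have h2 := congrArg Complex.re h
  simp only [Complex.add_re, Complex.conj_re, Complex.zero_re] at h2
  linarith

lemma intervalIntegral_conj (f : ℝ → ℂ) (a b : ℝ) :
    (starRingEnd ℂ) (∫ y in a..b, f y) = ∫ y in a..b, conj (f y) :=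
  ((by simp [intervalIntegral, integral_conj] :
    (∫ y in a..b, conj (f y)) = conj (∫ y in a..b, f y))).symm

lemma normSq_hasDeriv {f : ℝ → ℂ} {f' : ℂ} {s : Set ℝ} {r : ℝ}
    (hf : HasDerivWithinAt f f' s r) :
    HasDerivWithinAt (fun ρ => ‖f ρ‖ ^ 2)
      (2 * ((starRingEnd ℂ) (f r) * f').re) s r := by
  have hre : HasDerivWithinAt (fun ρ => (f ρ).re) f'.re s r := by
    exact Complex.reCLM.hasFDerivAt.comp_hasDerivWithinAt r hf
  have him : HasDerivWithinAt (fun ρ => (f ρ).im) f'.im s r := by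
    exact Complex.imCLM.hasFDerivAt.comp_hasDerivWithinAt r hf
  have h2 : HasDerivWithinAt (fun ρ => (f ρ).re * (f ρ).re + (f ρ).im * (f ρ).im)
      (f'.re * (f r).re + (f r).re * f'.re + (f'.im * (f r).im + (f r).im * f'.im)) s r :=
    (hre.mul hre).add (him.mul him)
  have heq : (fun ρ => ‖f ρ‖ ^ 2)
      = fun ρ => (f ρ).re * (f ρ).re + (f ρ).im * (f ρ).im := by
    funext ρ; rw [Complex.sq_norm, Complex.normSq_apply]
  rw [heq]
  convert h2 using 1
  simp only [Complex.mul_re, Complex.conj_re, Complex.conj_im]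
  ring

def dFun (F' : ℝ → ℝ) (n : ℕ) (uh wh uht wht : ℝ → Fin (n + 1) → Polynomial ℂ)
    (j : Fin (n + 1)) (r y : ℝ) : ℝ :=
  2 * ((starRingEnd ℂ) ((wh r j).eval ((y:ℝ):ℂ)) * (wht r j).eval ((y:ℝ):ℂ)).re
    + F' (‖(uh r j).eval ((y:ℝ):ℂ)‖ ^ 2) *
      (2 * ((starRingEnd ℂ) ((uh r j).eval ((y:ℝ):ℂ)) * (uht r j).eval ((y:ℝ):ℂ)).re)

def gFun (F : ℝ → ℝ) (n : ℕ) (uh wh : ℝ → Fin (n + 1) → Polynomial ℂ)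
    (j : Fin (n + 1)) (r y : ℝ) : ℝ :=
  ‖(wh r j).eval ((y:ℝ):ℂ)‖ ^ 2
    + F (‖(uh r j).eval ((y:ℝ):ℂ)‖ ^ 2)

lemma scheme2dot (n q : ℕ)
    (x : Fin (n + 2) → ℝ) (α₁ α₂ : ℝ)
    (uh wh uht wht : ℝ → Fin (n + 1) → Polynomial ℂ)
    (hdegu : ∀ t : ℝ, 0 ≤ t → ∀ j, (uh t j).natDegree ≤ q)
    (hdegw : ∀ t : ℝ, 0 ≤ t → ∀ j, (wh t j).natDegree ≤ q)
    (hdegut : ∀ t : ℝ, 0 ≤ t → ∀ j, (uht t j).natDegree ≤ q)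
    (hdegwt : ∀ t : ℝ, 0 ≤ t → ∀ j, (wht t j).natDegree ≤ q)
    (hderivu : ∀ t : ℝ, 0 ≤ t → ∀ j, ∀ y : ℝ,
      HasDerivWithinAt (fun s : ℝ => (uh s j).eval ((y : ℝ) : ℂ))
        ((uht t j).eval ((y : ℝ) : ℂ)) (Set.Ici 0) t)
    (hderivw : ∀ t : ℝ, 0 ≤ t → ∀ j, ∀ y : ℝ,
      HasDerivWithinAt (fun s : ℝ => (wh s j).eval ((y : ℝ) : ℂ))
        ((wht t j).eval ((y : ℝ) : ℂ)) (Set.Ici 0) t)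
    (scheme2 : ∀ t : ℝ, 0 ≤ t → ∀ j : Fin (n + 1), ∀ ψ : Polynomial ℂ, ψ.natDegree ≤ q →
      (∫ y in (x j.castSucc : ℝ)..(x j.succ : ℝ),
          (wh t j).eval ((y : ℝ) : ℂ) * ψ.eval ((y : ℝ) : ℂ)
            - (uh t j).eval ((y : ℝ) : ℂ) * (ψ.derivative.derivative).eval ((y : ℝ) : ℂ)) =
        fluxUx n x α₂ (uh t) j * ψ.eval ((x j.succ : ℝ) : ℂ)
          - fluxUx n x α₂ (uh t) (j - 1) * ψ.eval ((x j.castSucc : ℝ) : ℂ)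
          - fluxUhat n x α₁ (uh t) j * ψ.derivative.eval ((x j.succ : ℝ) : ℂ)
          + fluxUhat n x α₁ (uh t) (j - 1) * ψ.derivative.eval ((x j.castSucc : ℝ) : ℂ))
    (s : ℝ) (hs : 0 ≤ s) (j : Fin (n + 1)) (ψ : Polynomial ℂ) (hψ : ψ.natDegree ≤ q) :
    (∫ y in (x j.castSucc : ℝ)..(x j.succ : ℝ),
          (wht s j).eval ((y : ℝ) : ℂ) * ψ.eval ((y : ℝ) : ℂ)
            - (uht s j).eval ((y : ℝ) : ℂ) * (ψ.derivative.derivative).eval ((y : ℝ) : ℂ)) =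
        fluxUx n x α₂ (uht s) j * ψ.eval ((x j.succ : ℝ) : ℂ)
          - fluxUx n x α₂ (uht s) (j - 1) * ψ.eval ((x j.castSucc : ℝ) : ℂ)
          - fluxUhat n x α₁ (uht s) j * ψ.derivative.eval ((x j.succ : ℝ) : ℂ)
          + fluxUhat n x α₁ (uht s) (j - 1) * ψ.derivative.eval ((x j.castSucc : ℝ) : ℂ) := by
  set c1 : ℝ := (x j.castSucc : ℝ)
  set c2 : ℝ := (x j.succ : ℝ)
  have hOu : ∀ (k : Fin (n+1)) (O : Polynomial ℂ →ₗ[ℂ] ℂ),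
      HasDerivWithinAt (fun r => O (uh r k)) (O (uht s k)) (Set.Ici 0) s := fun k O =>
    master_hasDeriv q (fun r => uh r k) (fun r => uht r k)
      (fun r hr => hdegu r hr k) (fun r hr => hdegut r hr k)
      (fun r hr y => hderivu r hr k y) O s hs
  have hOw : ∀ (k : Fin (n+1)) (O : Polynomial ℂ →ₗ[ℂ] ℂ),
      HasDerivWithinAt (fun r => O (wh r k)) (O (wht s k)) (Set.Ici 0) s := fun k O =>
    master_hasDeriv q (fun r => wh r k) (fun r => wht r k)
      (fun r hr => hdegw r hr k) (fun r hr => hdegwt r hr k)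
      (fun r hr y => hderivw r hr k y) O s hs
  -- derivative of derivative-evaluations
  have hDu : ∀ (k : Fin (n+1)) (z : ℂ),
      HasDerivWithinAt (fun r => ((uh r k).derivative).eval z)
        (((uht s k).derivative).eval z) (Set.Ici 0) s := fun k z => by
    simpa using hOu k ((Polynomial.leval z).comp (Polynomial.derivative (R := ℂ)))
  -- flux derivatives
  have hfluxUx : ∀ (k : Fin (n+1)),
      HasDerivWithinAt (fun r => fluxUx n x α₂ (uh r) k)
        (fluxUx n x α₂ (uht s) k) (Set.Ici 0) s := by
    intro k
    unfold fluxUx trPlus trMinus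
    exact ((hDu (k+1) _).const_mul _).add ((hDu k _).const_mul _)
  have hfluxUhat : ∀ (k : Fin (n+1)),
      HasDerivWithinAt (fun r => fluxUhat n x α₁ (uh r) k)
        (fluxUhat n x α₁ (uht s) k) (Set.Ici 0) s := by
    intro k
    unfold fluxUhat trPlus trMinus
    have h1 : ∀ (kk : Fin (n+1)) (z : ℂ),
        HasDerivWithinAt (fun r => (uh r kk).eval z) ((uht s kk).eval z) (Set.Ici 0) s :=
      fun kk z => by simpa using hOu kk (Polynomial.leval z)
    exact ((h1 (k+1) _).const_mul _).add ((h1 k _).const_mul _)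
  -- the split identity
  have hsplit : ∀ r : ℝ, ∀ p1 p2 : Polynomial ℂ,
      (∫ y in c1..c2, (p1.eval ((y:ℝ):ℂ) * ψ.eval ((y:ℝ):ℂ)
          - p2.eval ((y:ℝ):ℂ) * (ψ.derivative.derivative).eval ((y:ℝ):ℂ)))
        = intLM c1 c2 ψ p1 - intLM c1 c2 ψ.derivative.derivative p2 := by
    intro r p1 p2
    rw [intLM_apply, intLM_apply]
    exact intervalIntegral.integral_sub
      (((contEval p1).mul (contEval ψ)).intervalIntegrable _ _)
      (((contEval p2).mul (contEval _)).intervalIntegrable _ _)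
  set Lfun : ℝ → ℂ := fun r =>
    intLM c1 c2 ψ (wh r j) - intLM c1 c2 ψ.derivative.derivative (uh r j) with hLdef
  set Rfun : ℝ → ℂ := fun r =>
    fluxUx n x α₂ (uh r) j * ψ.eval ((c2:ℝ):ℂ)
      - fluxUx n x α₂ (uh r) (j - 1) * ψ.eval ((c1:ℝ):ℂ)
      - fluxUhat n x α₁ (uh r) j * ψ.derivative.eval ((c2:ℝ):ℂ)
      + fluxUhat n x α₁ (uh r) (j - 1) * ψ.derivative.eval ((c1:ℝ):ℂ) with hRdef
  have hLR : ∀ r ∈ Set.Ici (0:ℝ), Lfun r = Rfun r := by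
    intro r hr
    rw [hLdef, hRdef]
    simp only
    rw [← hsplit r (wh r j) (uh r j)]
    exact scheme2 r hr j ψ hψ
  have hL : HasDerivWithinAt Lfun
      (intLM c1 c2 ψ (wht s j) - intLM c1 c2 ψ.derivative.derivative (uht s j))
      (Set.Ici 0) s := (hOw j _).sub (hOu j _)
  have hR : HasDerivWithinAt Rfun
      (fluxUx n x α₂ (uht s) j * ψ.eval ((c2:ℝ):ℂ)
        - fluxUx n x α₂ (uht s) (j - 1) * ψ.eval ((c1:ℝ):ℂ)
        - fluxUhat n x α₁ (uht s) j * ψ.derivative.eval ((c2:ℝ):ℂ)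
        + fluxUhat n x α₁ (uht s) (j - 1) * ψ.derivative.eval ((c1:ℝ):ℂ))
      (Set.Ici 0) s :=
    ((((hfluxUx j).mul_const _).sub ((hfluxUx (j-1)).mul_const _)).sub
      ((hfluxUhat j).mul_const _)).add ((hfluxUhat (j-1)).mul_const _)
  have hL' : HasDerivWithinAt Rfun
      (intLM c1 c2 ψ (wht s j) - intLM c1 c2 ψ.derivative.derivative (uht s j))
      (Set.Ici 0) s :=
    hL.congr (fun r hr => (hLR r hr).symm) (hLR s hs).symm
  have hud : UniqueDiffWithinAt ℝ (Set.Ici (0:ℝ)) s := (uniqueDiffOn_Ici 0) s hs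
  have heq := (hL'.derivWithin hud).symm.trans (hR.derivWithin hud)
  rw [hsplit s (wht s j) (uht s j)]
  exact heq

lemma Dzero (n q : ℕ)
    (x : Fin (n + 2) → ℝ) (F' : ℝ → ℝ) (hF' : ContinuousOn F' (Set.Ici 0))
    (α₁ α₂ : ℝ)
    (uh wh uht wht : ℝ → Fin (n + 1) → Polynomial ℂ)
    (hdegut : ∀ t : ℝ, 0 ≤ t → ∀ j, (uht t j).natDegree ≤ q)
    (hdegw : ∀ t : ℝ, 0 ≤ t → ∀ j, (wh t j).natDegree ≤ q)
    (scheme1 : ∀ t : ℝ, 0 ≤ t → ∀ j : Fin (n + 1), ∀ φ : Polynomial ℂ, φ.natDegree ≤ q →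
      (∫ y in (x j.castSucc : ℝ)..(x j.succ : ℝ),
          Complex.I * (uht t j).eval ((y : ℝ) : ℂ) * φ.eval ((y : ℝ) : ℂ)
            + (wh t j).eval ((y : ℝ) : ℂ) * (φ.derivative.derivative).eval ((y : ℝ) : ℂ)
            + (uh t j).eval ((y : ℝ) : ℂ)
                * (F' (‖(uh t j).eval ((y : ℝ) : ℂ)‖ ^ 2) : ℂ)
                * φ.eval ((y : ℝ) : ℂ)) =
        - fluxWx n x α₁ (wh t) j * φ.eval ((x j.succ : ℝ) : ℂ)
          + fluxWx n x α₁ (wh t) (j - 1) * φ.eval ((x j.castSucc : ℝ) : ℂ)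
          + fluxWtilde n x α₂ (wh t) j * φ.derivative.eval ((x j.succ : ℝ) : ℂ)
          - fluxWtilde n x α₂ (wh t) (j - 1) * φ.derivative.eval ((x j.castSucc : ℝ) : ℂ))
    (scheme2dot : ∀ t : ℝ, 0 ≤ t → ∀ j : Fin (n + 1), ∀ ψ : Polynomial ℂ, ψ.natDegree ≤ q →
      (∫ y in (x j.castSucc : ℝ)..(x j.succ : ℝ),
          (wht t j).eval ((y : ℝ) : ℂ) * ψ.eval ((y : ℝ) : ℂ)
            - (uht t j).eval ((y : ℝ) : ℂ) * (ψ.derivative.derivative).eval ((y : ℝ) : ℂ)) =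
        fluxUx n x α₂ (uht t) j * ψ.eval ((x j.succ : ℝ) : ℂ)
          - fluxUx n x α₂ (uht t) (j - 1) * ψ.eval ((x j.castSucc : ℝ) : ℂ)
          - fluxUhat n x α₁ (uht t) j * ψ.derivative.eval ((x j.succ : ℝ) : ℂ)
          + fluxUhat n x α₁ (uht t) (j - 1) * ψ.derivative.eval ((x j.castSucc : ℝ) : ℂ))
    (s : ℝ) (hs : 0 ≤ s) :
    (∑ j : Fin (n + 1), ∫ y in (x j.castSucc : ℝ)..(x j.succ : ℝ),
      (2 * ((starRingEnd ℂ) ((wh s j).eval ((y:ℝ):ℂ)) * (wht s j).eval ((y:ℝ):ℂ)).re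
        + F' (‖(uh s j).eval ((y:ℝ):ℂ)‖ ^ 2) *
          (2 * ((starRingEnd ℂ) ((uh s j).eval ((y:ℝ):ℂ)) * (uht s j).eval ((y:ℝ):ℂ)).re))) = 0 := by
  -- continuity of the F' composite
  have hFcont : ∀ j, Continuous (fun y : ℝ =>
      F' (‖(uh s j).eval ((y:ℝ):ℂ)‖ ^ 2)) := by
    intro j
    refine ContinuousOn.comp_continuous hF' ?_ (fun y => ?_)
    · exact (continuous_norm.comp (contEval _)).pow 2
    · exact Set.mem_Ici.2 (sq_nonneg _)
  -- complex integral quantities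
  set c1 : Fin (n+1) → ℝ := fun j => (x j.castSucc : ℝ) with hc1
  set c2 : Fin (n+1) → ℝ := fun j => (x j.succ : ℝ) with hc2
  set P1 : Fin (n+1) → ℂ := fun j => ∫ y in c1 j..c2 j,
    (wht s j).eval ((y:ℝ):ℂ) * conj ((wh s j).eval ((y:ℝ):ℂ)) with hP1
  set P2 : Fin (n+1) → ℂ := fun j => ∫ y in c1 j..c2 j,
    (uh s j).eval ((y:ℝ):ℂ) * (F' (‖(uh s j).eval ((y:ℝ):ℂ)‖ ^ 2) : ℂ)
      * conj ((uht s j).eval ((y:ℝ):ℂ)) with hP2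
  set T0 : Fin (n+1) → ℂ := fun j => ∫ y in c1 j..c2 j,
    Complex.I * (uht s j).eval ((y:ℝ):ℂ) * conj ((uht s j).eval ((y:ℝ):ℂ)) with hT0def
  set Q1 : Fin (n+1) → ℂ := fun j => ∫ y in c1 j..c2 j,
    (wh s j).eval ((y:ℝ):ℂ) * conj (((uht s j).derivative.derivative).eval ((y:ℝ):ℂ)) with hQ1
  set Q2 : Fin (n+1) → ℂ := fun j => ∫ y in c1 j..c2 j,
    (uht s j).eval ((y:ℝ):ℂ) * conj (((wh s j).derivative.derivative).eval ((y:ℝ):ℂ)) with hQ2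
  set Q3 : Fin (n+1) → ℂ := fun j => ∫ y in c1 j..c2 j,
    ((wh s j).derivative.derivative).eval ((y:ℝ):ℂ) * conj ((uht s j).eval ((y:ℝ):ℂ)) with hQ3
  -- the flux-side quantities
  set R1 : Fin (n+1) → ℂ := fun j =>
    - fluxWx n x α₁ (wh s) j * conj (trMinus n x (uht s) j)
      + fluxWx n x α₁ (wh s) (j-1) * conj (trPlus n x (uht s) (j-1))
      + fluxWtilde n x α₂ (wh s) j * conj (trMinus n x (fun k => (uht s k).derivative) j)
      - fluxWtilde n x α₂ (wh s) (j-1) * conj (trPlus n x (fun k => (uht s k).derivative) (j-1))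
    with hR1
  set R2 : Fin (n+1) → ℂ := fun j =>
    fluxUx n x α₂ (uht s) j * conj (trMinus n x (wh s) j)
      - fluxUx n x α₂ (uht s) (j-1) * conj (trPlus n x (wh s) (j-1))
      - fluxUhat n x α₁ (uht s) j * conj (trMinus n x (fun k => (wh s k).derivative) j)
      + fluxUhat n x α₁ (uht s) (j-1) * conj (trPlus n x (fun k => (wh s k).derivative) (j-1))
    with hR2
  set Bip : Fin (n+1) → ℂ := fun j =>
    (trMinus n x (wh s) j * conj (trMinus n x (fun k => (uht s k).derivative) j)
      - trMinus n x (fun k => (wh s k).derivative) j * conj (trMinus n x (uht s) j))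
    - (trPlus n x (wh s) (j-1) * conj (trPlus n x (fun k => (uht s k).derivative) (j-1))
      - trPlus n x (fun k => (wh s k).derivative) (j-1) * conj (trPlus n x (uht s) (j-1)))
    with hBip
  -- endpoint eval identities for the "plus side at the left endpoint"
  have hplus : ∀ (v : Fin (n+1) → Polynomial ℂ) (j : Fin (n+1)),
      trPlus n x v (j-1) = (v j).eval ((c1 j : ℝ) : ℂ) := by
    intro v j
    rw [trPlus, sub_add_cancel, hc1]
  have hminus : ∀ (v : Fin (n+1) → Polynomial ℂ) (j : Fin (n+1)),
      trMinus n x v j = (v j).eval ((c2 j : ℝ) : ℂ) := fun v j => rfl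
  -- Step 1 : scheme1 with φ = conj (uht s j)
  have step1 : ∀ j, T0 j + Q1 j + P2 j = R1 j := by
    intro j
    have hφdeg : ((uht s j).map (starRingEnd ℂ)).natDegree ≤ q :=
      le_trans Polynomial.natDegree_map_le (hdegut s hs j)
    have h := scheme1 s hs j ((uht s j).map (starRingEnd ℂ)) hφdeg
    -- rewrite the boundary evaluations
    have hb1 : (((uht s j).map (starRingEnd ℂ))).eval ((c2 j : ℝ):ℂ)
        = conj (trMinus n x (uht s) j) := by rw [conj_eval]; rfl
    have hb2 : (((uht s j).map (starRingEnd ℂ))).eval ((c1 j : ℝ):ℂ)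
        = conj (trPlus n x (uht s) (j-1)) := by rw [conj_eval, hplus]
    have hdm : ((uht s j).map (starRingEnd ℂ)).derivative
        = ((uht s j).derivative).map (starRingEnd ℂ) := by
      rw [Polynomial.derivative_map]
    have hb3 : (((uht s j).map (starRingEnd ℂ))).derivative.eval ((c2 j : ℝ):ℂ)
        = conj (trMinus n x (fun k => (uht s k).derivative) j) := by
      rw [hdm, conj_eval]; rfl
    have hb4 : (((uht s j).map (starRingEnd ℂ))).derivative.eval ((c1 j : ℝ):ℂ)
        = conj (trPlus n x (fun k => (uht s k).derivative) (j-1)) := by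
      rw [hdm, conj_eval, hplus]
    rw [hb1, hb2, hb3, hb4] at h
    -- split the integral on the left of h
    have i1 : IntervalIntegrable (fun y : ℝ => Complex.I * (uht s j).eval ((y:ℝ):ℂ)
        * conj ((uht s j).eval ((y:ℝ):ℂ))) volume (c1 j) (c2 j) :=
      ((continuous_const.mul (contEval _)).mul
        (continuous_star.comp (contEval _))).intervalIntegrable _ _
    have i2 : IntervalIntegrable (fun y : ℝ => (wh s j).eval ((y:ℝ):ℂ)
        * conj (((uht s j).derivative.derivative).eval ((y:ℝ):ℂ))) volume (c1 j) (c2 j) :=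
      ((contEval _).mul (continuous_star.comp (contEval _))).intervalIntegrable _ _
    have i3 : IntervalIntegrable (fun y : ℝ => (uh s j).eval ((y:ℝ):ℂ)
        * (F' (‖(uh s j).eval ((y:ℝ):ℂ)‖ ^ 2) : ℂ)
        * conj ((uht s j).eval ((y:ℝ):ℂ))) volume (c1 j) (c2 j) :=
      (((contEval _).mul (Complex.continuous_ofReal.comp (hFcont j))).mul
        (continuous_star.comp (contEval _))).intervalIntegrable _ _
    have hsplit : (∫ y in c1 j..c2 j,
        Complex.I * (uht s j).eval ((y:ℝ):ℂ)
            * ((uht s j).map (starRingEnd ℂ)).eval ((y:ℝ):ℂ)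
          + (wh s j).eval ((y:ℝ):ℂ)
            * ((((uht s j).map (starRingEnd ℂ))).derivative.derivative).eval ((y:ℝ):ℂ)
          + (uh s j).eval ((y:ℝ):ℂ)
              * (F' (‖(uh s j).eval ((y:ℝ):ℂ)‖ ^ 2) : ℂ)
              * ((uht s j).map (starRingEnd ℂ)).eval ((y:ℝ):ℂ))
        = T0 j + Q1 j + P2 j := by
      have hcongr : (∫ y in c1 j..c2 j,
          Complex.I * (uht s j).eval ((y:ℝ):ℂ)
              * ((uht s j).map (starRingEnd ℂ)).eval ((y:ℝ):ℂ)
            + (wh s j).eval ((y:ℝ):ℂ)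
              * ((((uht s j).map (starRingEnd ℂ))).derivative.derivative).eval ((y:ℝ):ℂ)
            + (uh s j).eval ((y:ℝ):ℂ)
                * (F' (‖(uh s j).eval ((y:ℝ):ℂ)‖ ^ 2) : ℂ)
                * ((uht s j).map (starRingEnd ℂ)).eval ((y:ℝ):ℂ))
          = ∫ y in c1 j..c2 j,
            ((Complex.I * (uht s j).eval ((y:ℝ):ℂ) * conj ((uht s j).eval ((y:ℝ):ℂ))
            + (wh s j).eval ((y:ℝ):ℂ)
                * conj (((uht s j).derivative.derivative).eval ((y:ℝ):ℂ)))
            + (uh s j).eval ((y:ℝ):ℂ)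
                * (F' (‖(uh s j).eval ((y:ℝ):ℂ)‖ ^ 2) : ℂ)
                * conj ((uht s j).eval ((y:ℝ):ℂ))) := by
        refine intervalIntegral.integral_congr fun y _ => ?_
        have e1 : ((uht s j).map (starRingEnd ℂ)).eval ((y:ℝ):ℂ)
            = conj ((uht s j).eval ((y:ℝ):ℂ)) := conj_eval _ _
        have e2 : (((uht s j).map (starRingEnd ℂ)).derivative.derivative).eval ((y:ℝ):ℂ)
            = conj (((uht s j).derivative.derivative).eval ((y:ℝ):ℂ)) := by
          rw [hdm, Polynomial.derivative_map, conj_eval]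
        rw [e1, e2]
      rw [hcongr, intervalIntegral.integral_add (i1.add i2) i3,
        intervalIntegral.integral_add i1 i2, hT0def, hQ1, hP2]
    rw [hsplit] at h
    exact h
  -- Step 2 : scheme2dot with ψ = conj (wh s j)
  have step2 : ∀ j, P1 j - Q2 j = R2 j := by
    intro j
    have hψdeg : ((wh s j).map (starRingEnd ℂ)).natDegree ≤ q :=
      le_trans Polynomial.natDegree_map_le (hdegw s hs j)
    have h := scheme2dot s hs j ((wh s j).map (starRingEnd ℂ)) hψdeg
    have hdm : ((wh s j).map (starRingEnd ℂ)).derivative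
        = ((wh s j).derivative).map (starRingEnd ℂ) := by
      rw [Polynomial.derivative_map]
    have hb1 : (((wh s j).map (starRingEnd ℂ))).eval ((c2 j : ℝ):ℂ)
        = conj (trMinus n x (wh s) j) := by rw [conj_eval]; rfl
    have hb2 : (((wh s j).map (starRingEnd ℂ))).eval ((c1 j : ℝ):ℂ)
        = conj (trPlus n x (wh s) (j-1)) := by rw [conj_eval, hplus]
    have hb3 : (((wh s j).map (starRingEnd ℂ))).derivative.eval ((c2 j : ℝ):ℂ)
        = conj (trMinus n x (fun k => (wh s k).derivative) j) := by
      rw [hdm, conj_eval]; rfl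
    have hb4 : (((wh s j).map (starRingEnd ℂ))).derivative.eval ((c1 j : ℝ):ℂ)
        = conj (trPlus n x (fun k => (wh s k).derivative) (j-1)) := by
      rw [hdm, conj_eval, hplus]
    rw [hb1, hb2, hb3, hb4] at h
    have i1 : IntervalIntegrable (fun y : ℝ => (wht s j).eval ((y:ℝ):ℂ)
        * conj ((wh s j).eval ((y:ℝ):ℂ))) volume (c1 j) (c2 j) :=
      ((contEval _).mul (continuous_star.comp (contEval _))).intervalIntegrable _ _
    have i2 : IntervalIntegrable (fun y : ℝ => (uht s j).eval ((y:ℝ):ℂ)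
        * conj (((wh s j).derivative.derivative).eval ((y:ℝ):ℂ))) volume (c1 j) (c2 j) :=
      ((contEval _).mul (continuous_star.comp (contEval _))).intervalIntegrable _ _
    have hcongr : (∫ y in c1 j..c2 j,
          (wht s j).eval ((y:ℝ):ℂ) * ((wh s j).map (starRingEnd ℂ)).eval ((y:ℝ):ℂ)
            - (uht s j).eval ((y:ℝ):ℂ)
              * ((((wh s j).map (starRingEnd ℂ)).derivative.derivative)).eval ((y:ℝ):ℂ))
        = ∫ y in c1 j..c2 j,
          ((wht s j).eval ((y:ℝ):ℂ) * conj ((wh s j).eval ((y:ℝ):ℂ))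
            - (uht s j).eval ((y:ℝ):ℂ)
              * conj (((wh s j).derivative.derivative).eval ((y:ℝ):ℂ))) := by
      refine intervalIntegral.integral_congr fun y _ => ?_
      have e1 : ((wh s j).map (starRingEnd ℂ)).eval ((y:ℝ):ℂ)
          = conj ((wh s j).eval ((y:ℝ):ℂ)) := conj_eval _ _
      have e2 : (((wh s j).map (starRingEnd ℂ)).derivative.derivative).eval ((y:ℝ):ℂ)
          = conj (((wh s j).derivative.derivative).eval ((y:ℝ):ℂ)) := by
        rw [hdm, Polynomial.derivative_map, conj_eval]
      rw [e1, e2]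
    rw [hcongr, intervalIntegral.integral_sub i1 i2] at h
    have hg : P1 j - Q2 j = (∫ y in c1 j..c2 j,
        (wht s j).eval ((y:ℝ):ℂ) * conj ((wh s j).eval ((y:ℝ):ℂ)))
      - ∫ y in c1 j..c2 j, (uht s j).eval ((y:ℝ):ℂ)
          * conj (((wh s j).derivative.derivative).eval ((y:ℝ):ℂ)) := by
      rw [hP1, hQ2]
    rw [hg, h, hR2]
  -- Step 3 : integration by parts, Q1 j = Q3 j + Bip j
  have step3 : ∀ j, Q1 j = Q3 j + Bip j := by
    intro j
    have h := polyIBP (wh s j) ((uht s j).map (starRingEnd ℂ)) (c1 j) (c2 j)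
    have hdm : ((uht s j).map (starRingEnd ℂ)).derivative
        = ((uht s j).derivative).map (starRingEnd ℂ) := by
      rw [Polynomial.derivative_map]
    have hdm2 : ((uht s j).map (starRingEnd ℂ)).derivative.derivative
        = ((uht s j).derivative.derivative).map (starRingEnd ℂ) := by
      rw [hdm, Polynomial.derivative_map]
    have hLHS : (∫ y in c1 j..c2 j, (wh s j).eval ((y:ℝ):ℂ)
        * (((uht s j).map (starRingEnd ℂ)).derivative.derivative).eval ((y:ℝ):ℂ)) = Q1 j := by
      rw [hQ1]
      refine intervalIntegral.integral_congr fun y _ => ?_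
      rw [hdm2, conj_eval]
    have hRHS : (∫ y in c1 j..c2 j, ((wh s j).derivative.derivative).eval ((y:ℝ):ℂ)
        * ((uht s j).map (starRingEnd ℂ)).eval ((y:ℝ):ℂ)) = Q3 j := by
      rw [hQ3]
      refine intervalIntegral.integral_congr fun y _ => ?_
      rw [conj_eval]
    rw [hLHS, hRHS] at h
    have hbd : ((wh s j).eval ((c2 j:ℝ):ℂ)
          * ((uht s j).map (starRingEnd ℂ)).derivative.eval ((c2 j:ℝ):ℂ)
        - (wh s j).derivative.eval ((c2 j:ℝ):ℂ)
          * ((uht s j).map (starRingEnd ℂ)).eval ((c2 j:ℝ):ℂ))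
        - ((wh s j).eval ((c1 j:ℝ):ℂ)
          * ((uht s j).map (starRingEnd ℂ)).derivative.eval ((c1 j:ℝ):ℂ)
        - (wh s j).derivative.eval ((c1 j:ℝ):ℂ)
          * ((uht s j).map (starRingEnd ℂ)).eval ((c1 j:ℝ):ℂ)) = Bip j := by
      rw [hdm, conj_eval, conj_eval, conj_eval, conj_eval]
      rw [show (wh s j).eval ((c2 j:ℝ):ℂ) = trMinus n x (wh s) j from rfl,
        show (wh s j).derivative.eval ((c2 j:ℝ):ℂ)
          = trMinus n x (fun k => (wh s k).derivative) j from rfl,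
        show (uht s j).eval ((c2 j:ℝ):ℂ) = trMinus n x (uht s) j from rfl,
        show (uht s j).derivative.eval ((c2 j:ℝ):ℂ)
          = trMinus n x (fun k => (uht s k).derivative) j from rfl,
        show (wh s j).eval ((c1 j:ℝ):ℂ) = trPlus n x (wh s) (j-1) from
          (hplus (wh s) j).symm,
        show (wh s j).derivative.eval ((c1 j:ℝ):ℂ)
          = trPlus n x (fun k => (wh s k).derivative) (j-1) from
          (hplus (fun k => (wh s k).derivative) j).symm,
        show (uht s j).eval ((c1 j:ℝ):ℂ) = trPlus n x (uht s) (j-1) from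
          (hplus (uht s) j).symm,
        show (uht s j).derivative.eval ((c1 j:ℝ):ℂ)
          = trPlus n x (fun k => (uht s k).derivative) (j-1) from
          (hplus (fun k => (uht s k).derivative) j).symm,
        hBip]
    rw [h, hbd]
  -- conj symmetry between Q2 and Q3
  have hQ23 : ∀ j, Q3 j = conj (Q2 j) := by
    intro j
    show (∫ y in c1 j..c2 j, ((wh s j).derivative.derivative).eval ((y:ℝ):ℂ)
        * conj ((uht s j).eval ((y:ℝ):ℂ)))
      = conj (∫ y in c1 j..c2 j, (uht s j).eval ((y:ℝ):ℂ)
        * conj (((wh s j).derivative.derivative).eval ((y:ℝ):ℂ)))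
    rw [show (starRingEnd ℂ) (∫ y in c1 j..c2 j, (uht s j).eval ((y:ℝ):ℂ)
        * conj (((wh s j).derivative.derivative).eval ((y:ℝ):ℂ)))
      = ∫ y in c1 j..c2 j, conj ((uht s j).eval ((y:ℝ):ℂ)
        * conj (((wh s j).derivative.derivative).eval ((y:ℝ):ℂ))) from
      intervalIntegral_conj _ _ _]
    refine intervalIntegral.integral_congr fun y _ => ?_
    simp only [map_mul, Complex.conj_conj]
    ring
  -- the purely imaginary term
  have hT0re : ∀ j, (T0 j).re = 0 := by
    intro j
    have hz : (∫ y in c1 j..c2 j, (uht s j).eval ((y:ℝ):ℂ)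
        * conj ((uht s j).eval ((y:ℝ):ℂ))) = conj (∫ y in c1 j..c2 j,
        (uht s j).eval ((y:ℝ):ℂ) * conj ((uht s j).eval ((y:ℝ):ℂ))) := by
      rw [show (starRingEnd ℂ) (∫ y in c1 j..c2 j, (uht s j).eval ((y:ℝ):ℂ)
          * conj ((uht s j).eval ((y:ℝ):ℂ)))
        = ∫ y in c1 j..c2 j, conj ((uht s j).eval ((y:ℝ):ℂ)
          * conj ((uht s j).eval ((y:ℝ):ℂ))) from intervalIntegral_conj _ _ _]
      refine intervalIntegral.integral_congr fun y _ => ?_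
      simp only [map_mul, Complex.conj_conj]
      ring
    have hpull : T0 j = Complex.I * ∫ y in c1 j..c2 j, (uht s j).eval ((y:ℝ):ℂ)
        * conj ((uht s j).eval ((y:ℝ):ℂ)) := by
      show (∫ y in c1 j..c2 j, Complex.I * (uht s j).eval ((y:ℝ):ℂ)
          * conj ((uht s j).eval ((y:ℝ):ℂ)))
        = Complex.I * ∫ y in c1 j..c2 j, (uht s j).eval ((y:ℝ):ℂ)
          * conj ((uht s j).eval ((y:ℝ):ℂ))
      rw [← intervalIntegral.integral_const_mul]
      exact intervalIntegral.integral_congr fun y _ => by ring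
    have him : (∫ y in c1 j..c2 j, (uht s j).eval ((y:ℝ):ℂ)
        * conj ((uht s j).eval ((y:ℝ):ℂ))).im = 0 := by
      rw [← Complex.conj_eq_iff_im]
      exact hz.symm
    rw [hpull]
    simp [Complex.mul_re, him]
  -- value of each cell integral
  have Yval : ∀ j, (∫ y in c1 j..c2 j,
      (2 * ((starRingEnd ℂ) ((wh s j).eval ((y:ℝ):ℂ)) * (wht s j).eval ((y:ℝ):ℂ)).re
        + F' (‖(uh s j).eval ((y:ℝ):ℂ)‖ ^ 2) *
          (2 * ((starRingEnd ℂ) ((uh s j).eval ((y:ℝ):ℂ)) * (uht s j).eval ((y:ℝ):ℂ)).re)))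
      = 2 * ((P1 j).re + (P2 j).re) := by
    intro j
    have i1 : IntervalIntegrable (fun y : ℝ => (wht s j).eval ((y:ℝ):ℂ)
        * conj ((wh s j).eval ((y:ℝ):ℂ))) volume (c1 j) (c2 j) :=
      ((contEval _).mul (continuous_star.comp (contEval _))).intervalIntegrable _ _
    have i3 : IntervalIntegrable (fun y : ℝ => (uh s j).eval ((y:ℝ):ℂ)
        * (F' (‖(uh s j).eval ((y:ℝ):ℂ)‖ ^ 2) : ℂ)
        * conj ((uht s j).eval ((y:ℝ):ℂ))) volume (c1 j) (c2 j) :=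
      (((contEval _).mul (Complex.continuous_ofReal.comp (hFcont j))).mul
        (continuous_star.comp (contEval _))).intervalIntegrable _ _
    have hre1 : (P1 j).re = ∫ y in c1 j..c2 j,
        ((wht s j).eval ((y:ℝ):ℂ) * conj ((wh s j).eval ((y:ℝ):ℂ))).re := by
      rw [hP1]
      exact (Complex.reCLM.intervalIntegral_comp_comm i1).symm
    have hre2 : (P2 j).re = ∫ y in c1 j..c2 j,
        ((uh s j).eval ((y:ℝ):ℂ) * (F' (‖(uh s j).eval ((y:ℝ):ℂ)‖ ^ 2) : ℂ)
          * conj ((uht s j).eval ((y:ℝ):ℂ))).re := by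
      rw [hP2]
      exact (Complex.reCLM.intervalIntegral_comp_comm i3).symm
    rw [hre1, hre2]
    have iA : IntervalIntegrable (fun y : ℝ =>
        ((wht s j).eval ((y:ℝ):ℂ) * conj ((wh s j).eval ((y:ℝ):ℂ))).re)
        volume (c1 j) (c2 j) :=
      (Complex.continuous_re.comp ((contEval _).mul
        (continuous_star.comp (contEval _)))).intervalIntegrable _ _
    have iB : IntervalIntegrable (fun y : ℝ =>
        ((uh s j).eval ((y:ℝ):ℂ) * (F' (‖(uh s j).eval ((y:ℝ):ℂ)‖ ^ 2) : ℂ)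
          * conj ((uht s j).eval ((y:ℝ):ℂ))).re) volume (c1 j) (c2 j) :=
      (Complex.continuous_re.comp (((contEval _).mul
        (Complex.continuous_ofReal.comp (hFcont j))).mul
        (continuous_star.comp (contEval _)))).intervalIntegrable _ _
    rw [← intervalIntegral.integral_add iA iB, ← intervalIntegral.integral_const_mul]
    refine intervalIntegral.integral_congr fun y _ => ?_
    simp only [Complex.mul_re, Complex.mul_im, Complex.conj_re, Complex.conj_im,
      Complex.ofReal_re, Complex.ofReal_im]
    ring
  -- combine the per-cell identities
  have hcell : ∀ j, (P1 j).re + (P2 j).re = (R1 j + R2 j - Bip j).re := by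
    intro j
    have h1 := congrArg Complex.re (step1 j)
    have h2 := congrArg Complex.re (step2 j)
    have h3 := congrArg Complex.re (step3 j)
    have h4 := congrArg Complex.re (hQ23 j)
    have h5 := hT0re j
    simp only [Complex.add_re, Complex.sub_re, Complex.conj_re] at h1 h2 h3 h4 ⊢
    linarith
  -- interface splitting
  set E : Fin (n+1) → ℂ := fun j =>
    - fluxWx n x α₁ (wh s) j * conj (trMinus n x (uht s) j)
    + fluxWtilde n x α₂ (wh s) j * conj (trMinus n x (fun k => (uht s k).derivative) j)
    + fluxUx n x α₂ (uht s) j * conj (trMinus n x (wh s) j)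
    - fluxUhat n x α₁ (uht s) j * conj (trMinus n x (fun k => (wh s k).derivative) j)
    - trMinus n x (wh s) j * conj (trMinus n x (fun k => (uht s k).derivative) j)
    + trMinus n x (fun k => (wh s k).derivative) j * conj (trMinus n x (uht s) j) with hE
  set G : Fin (n+1) → ℂ := fun k =>
    fluxWx n x α₁ (wh s) k * conj (trPlus n x (uht s) k)
    - fluxWtilde n x α₂ (wh s) k * conj (trPlus n x (fun kk => (uht s kk).derivative) k)
    - fluxUx n x α₂ (uht s) k * conj (trPlus n x (wh s) k)
    + fluxUhat n x α₁ (uht s) k * conj (trPlus n x (fun kk => (wh s kk).derivative) k)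
    + trPlus n x (wh s) k * conj (trPlus n x (fun kk => (uht s kk).derivative) k)
    - trPlus n x (fun kk => (wh s kk).derivative) k * conj (trPlus n x (uht s) k) with hG
  have hsplitj : ∀ j, R1 j + R2 j - Bip j = E j + G (j-1) := by
    intro j
    rw [hR1, hR2, hBip, hE, hG]
    simp only
    ring
  have hEG : ∀ k, (E k + G k).re = 0 := by
    intro k
    have h := interface_cancel α₁ α₂ (trPlus n x (uht s) k) (trMinus n x (uht s) k)
      (trPlus n x (fun kk => (uht s kk).derivative) k)
      (trMinus n x (fun kk => (uht s kk).derivative) k)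
      (trPlus n x (wh s) k) (trMinus n x (wh s) k)
      (trPlus n x (fun kk => (wh s kk).derivative) k)
      (trMinus n x (fun kk => (wh s kk).derivative) k)
    have heq : E k + G k
        = ((1-(α₁:ℂ)) * trPlus n x (fun kk => (wh s kk).derivative) k
            + (α₁:ℂ) * trMinus n x (fun kk => (wh s kk).derivative) k)
            * (conj (trPlus n x (uht s) k) - conj (trMinus n x (uht s) k))
        + ((1-(α₂:ℂ)) * trPlus n x (wh s) k + (α₂:ℂ) * trMinus n x (wh s) k)
            * (conj (trMinus n x (fun kk => (uht s kk).derivative) k)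
              - conj (trPlus n x (fun kk => (uht s kk).derivative) k))
        + ((α₂:ℂ) * trPlus n x (fun kk => (uht s kk).derivative) k
            + (1-(α₂:ℂ)) * trMinus n x (fun kk => (uht s kk).derivative) k)
            * (conj (trMinus n x (wh s) k) - conj (trPlus n x (wh s) k))
        - ((α₁:ℂ) * trPlus n x (uht s) k + (1-(α₁:ℂ)) * trMinus n x (uht s) k)
            * (conj (trMinus n x (fun kk => (wh s kk).derivative) k)
              - conj (trPlus n x (fun kk => (wh s kk).derivative) k))
        - trMinus n x (wh s) k * conj (trMinus n x (fun kk => (uht s kk).derivative) k)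
        + trMinus n x (fun kk => (wh s kk).derivative) k * conj (trMinus n x (uht s) k)
        + trPlus n x (wh s) k * conj (trPlus n x (fun kk => (uht s kk).derivative) k)
        - trPlus n x (fun kk => (wh s kk).derivative) k * conj (trPlus n x (uht s) k) := by
      rw [hE, hG]
      simp only [fluxWx, fluxWtilde, fluxUx, fluxUhat]
      ring
    rw [heq]
    rw [show ∀ z1 z2 z3 z4 z5 z6 z7 z8 : ℂ, z1 + z2 + z3 - z4 - z5 + z6 + z7 - z8
        = (z1 + z2 + z3 - z4 - z5 + z6 + z7 - z8) from fun _ _ _ _ _ _ _ _ => rfl]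
    have : ((1-(α₁:ℂ)) * trPlus n x (fun kk => (wh s kk).derivative) k
            + (α₁:ℂ) * trMinus n x (fun kk => (wh s kk).derivative) k)
            * (conj (trPlus n x (uht s) k) - conj (trMinus n x (uht s) k))
        + ((1-(α₂:ℂ)) * trPlus n x (wh s) k + (α₂:ℂ) * trMinus n x (wh s) k)
            * (conj (trMinus n x (fun kk => (uht s kk).derivative) k)
              - conj (trPlus n x (fun kk => (uht s kk).derivative) k))
        + ((α₂:ℂ) * trPlus n x (fun kk => (uht s kk).derivative) k
            + (1-(α₂:ℂ)) * trMinus n x (fun kk => (uht s kk).derivative) k)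
            * (conj (trMinus n x (wh s) k) - conj (trPlus n x (wh s) k))
        - ((α₁:ℂ) * trPlus n x (uht s) k + (1-(α₁:ℂ)) * trMinus n x (uht s) k)
            * (conj (trMinus n x (fun kk => (wh s kk).derivative) k)
              - conj (trPlus n x (fun kk => (wh s kk).derivative) k))
        - trMinus n x (wh s) k * conj (trMinus n x (fun kk => (uht s kk).derivative) k)
        + trMinus n x (fun kk => (wh s kk).derivative) k * conj (trMinus n x (uht s) k)
        + trPlus n x (wh s) k * conj (trPlus n x (fun kk => (uht s kk).derivative) k)
        - trPlus n x (fun kk => (wh s kk).derivative) k * conj (trPlus n x (uht s) k)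
        = ((1-(α₁:ℂ)) * trPlus n x (fun kk => (wh s kk).derivative) k
            + (α₁:ℂ) * trMinus n x (fun kk => (wh s kk).derivative) k)
            * (conj (trPlus n x (uht s) k) - conj (trMinus n x (uht s) k))
        + ((1-(α₂:ℂ)) * trPlus n x (wh s) k + (α₂:ℂ) * trMinus n x (wh s) k)
            * (conj (trMinus n x (fun kk => (uht s kk).derivative) k)
              - conj (trPlus n x (fun kk => (uht s kk).derivative) k))
        + ((α₂:ℂ) * trPlus n x (fun kk => (uht s kk).derivative) k
            + (1-(α₂:ℂ)) * trMinus n x (fun kk => (uht s kk).derivative) k)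
            * (conj (trMinus n x (wh s) k) - conj (trPlus n x (wh s) k))
        - ((α₁:ℂ) * trPlus n x (uht s) k + (1-(α₁:ℂ)) * trMinus n x (uht s) k)
            * (conj (trMinus n x (fun kk => (wh s kk).derivative) k)
              - conj (trPlus n x (fun kk => (wh s kk).derivative) k))
        - trMinus n x (wh s) k * conj (trMinus n x (fun kk => (uht s kk).derivative) k)
        + trMinus n x (fun kk => (wh s kk).derivative) k * conj (trMinus n x (uht s) k)
        + trPlus n x (wh s) k * conj (trPlus n x (fun kk => (uht s kk).derivative) k)
        - trPlus n x (fun kk => (wh s kk).derivative) k * conj (trPlus n x (uht s) k) := rfl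
    have hmatch : (((1-(α₁:ℂ)) * trPlus n x (fun kk => (wh s kk).derivative) k
            + (α₁:ℂ) * trMinus n x (fun kk => (wh s kk).derivative) k)
            * (conj (trPlus n x (uht s) k) - conj (trMinus n x (uht s) k))
        + ((1-(α₂:ℂ)) * trPlus n x (wh s) k + (α₂:ℂ) * trMinus n x (wh s) k)
            * (conj (trMinus n x (fun kk => (uht s kk).derivative) k)
              - conj (trPlus n x (fun kk => (uht s kk).derivative) k))
        + ((α₂:ℂ) * trPlus n x (fun kk => (uht s kk).derivative) k
            + (1-(α₂:ℂ)) * trMinus n x (fun kk => (uht s kk).derivative) k)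
            * (conj (trMinus n x (wh s) k) - conj (trPlus n x (wh s) k))
        - ((α₁:ℂ) * trPlus n x (uht s) k + (1-(α₁:ℂ)) * trMinus n x (uht s) k)
            * (conj (trMinus n x (fun kk => (wh s kk).derivative) k)
              - conj (trPlus n x (fun kk => (wh s kk).derivative) k))
        - trMinus n x (wh s) k * conj (trMinus n x (fun kk => (uht s kk).derivative) k)
        + trMinus n x (fun kk => (wh s kk).derivative) k * conj (trMinus n x (uht s) k)
        + trPlus n x (wh s) k * conj (trPlus n x (fun kk => (uht s kk).derivative) k)
        - trPlus n x (fun kk => (wh s kk).derivative) k * conj (trPlus n x (uht s) k)).re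
        = 0 := by
      exact h
    exact hmatch
  -- sum over interfaces vanishes
  have hsum : ∑ j : Fin (n+1), (R1 j + R2 j - Bip j).re = 0 := by
    have h1 : ∀ j : Fin (n+1), (R1 j + R2 j - Bip j).re = (E j).re + (G (j-1)).re :=
      fun j => by rw [hsplitj j, Complex.add_re]
    rw [Finset.sum_congr rfl (fun j _ => h1 j), Finset.sum_add_distrib]
    rw [show (∑ j : Fin (n+1), (G (j-1)).re) = ∑ j : Fin (n+1), (G j).re from
      Fintype.sum_equiv (Equiv.subRight 1) _ _ (fun j => rfl)]
    rw [← Finset.sum_add_distrib]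
    simp only [← Complex.add_re]
    exact Finset.sum_eq_zero fun k _ => hEG k
  -- conclude
  have hfinal : ∑ j : Fin (n+1), (2 * ((P1 j).re + (P2 j).re)) = 0 := by
    rw [Finset.sum_congr rfl (fun j _ => by rw [hcell j] :
      ∀ j ∈ Finset.univ, 2 * ((P1 j).re + (P2 j).re) = 2 * ((R1 j + R2 j - Bip j).re))]
    rw [← Finset.mul_sum, hsum, mul_zero]
  rw [Finset.sum_congr rfl (fun j _ => Yval j)]
  exact hfinal

/-- **Theorem 2.1, conservation of the discrete Hamiltonian**: if `(u_h, w_h)` is a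
solution of the semi-discrete DG scheme for the nonlinear biharmonic Schrödinger equation
`i u_t + u_xxxx + u F'(|u|²) = 0` with numerical fluxes given by parameters
`α₁, α₂ ∈ [0,1]`, where `F : [0,∞) → ℝ` is differentiable with derivative `F'` and
`F ≥ 0`, and `t ↦ u_h(t), w_h(t)` are continuously differentiable in `t`, then the
discrete Hamiltonian `H_h(t) = ∫_I (|w_h(x,t)|² + F(|u_h(x,t)|²)) dx` satisfies
`H_h(t) = H_h(0)` for all `t ≥ 0`. -/
theorem dg_hamiltonian_conservation
    (n q : ℕ) (hq : 1 ≤ q)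
    (x : Fin (n + 2) → ℝ) (hx : StrictMono x)
    (F F' : ℝ → ℝ)
    -- F is differentiable on [0,∞) with derivative F', F' continuous, and F ≥ 0
    (hFd : ∀ s ∈ Set.Ici (0 : ℝ), HasDerivWithinAt F (F' s) (Set.Ici (0 : ℝ)) s)
    (hF' : ContinuousOn F' (Set.Ici 0))
    (hFnn : ∀ s ∈ Set.Ici (0 : ℝ), 0 ≤ F s)
    (α₁ α₂ : ℝ) (hα₁ : α₁ ∈ Set.Icc (0 : ℝ) 1) (hα₂ : α₂ ∈ Set.Icc (0 : ℝ) 1)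
    (uh wh uht wht : ℝ → Fin (n + 1) → Polynomial ℂ)
    (hdegu : ∀ t : ℝ, 0 ≤ t → ∀ j, (uh t j).natDegree ≤ q)
    (hdegw : ∀ t : ℝ, 0 ≤ t → ∀ j, (wh t j).natDegree ≤ q)
    (hdegut : ∀ t : ℝ, 0 ≤ t → ∀ j, (uht t j).natDegree ≤ q)
    (hdegwt : ∀ t : ℝ, 0 ≤ t → ∀ j, (wht t j).natDegree ≤ q)
    -- u_h and w_h are continuously differentiable in time, with derivatives u_ht, w_ht
    (hderivu : ∀ t : ℝ, 0 ≤ t → ∀ j, ∀ y : ℝ,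
      HasDerivWithinAt (fun s : ℝ => (uh s j).eval ((y : ℝ) : ℂ))
        ((uht t j).eval ((y : ℝ) : ℂ)) (Set.Ici 0) t)
    (hderivw : ∀ t : ℝ, 0 ≤ t → ∀ j, ∀ y : ℝ,
      HasDerivWithinAt (fun s : ℝ => (wh s j).eval ((y : ℝ) : ℂ))
        ((wht t j).eval ((y : ℝ) : ℂ)) (Set.Ici 0) t)
    (hcontu : ∀ j, ∀ y : ℝ,
      ContinuousOn (fun t : ℝ => (uht t j).eval ((y : ℝ) : ℂ)) (Set.Ici 0))
    (hcontw : ∀ j, ∀ y : ℝ,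
      ContinuousOn (fun t : ℝ => (wht t j).eval ((y : ℝ) : ℂ)) (Set.Ici 0))
    -- first DG scheme equation, on each cell, for every test polynomial φ of degree ≤ q
    (scheme1 : ∀ t : ℝ, 0 ≤ t → ∀ j : Fin (n + 1), ∀ φ : Polynomial ℂ, φ.natDegree ≤ q →
      (∫ y in (x j.castSucc : ℝ)..(x j.succ : ℝ),
          Complex.I * (uht t j).eval ((y : ℝ) : ℂ) * φ.eval ((y : ℝ) : ℂ)
            + (wh t j).eval ((y : ℝ) : ℂ) * (φ.derivative.derivative).eval ((y : ℝ) : ℂ)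
            + (uh t j).eval ((y : ℝ) : ℂ)
                * (F' (‖(uh t j).eval ((y : ℝ) : ℂ)‖ ^ 2) : ℂ)
                * φ.eval ((y : ℝ) : ℂ)) =
        - fluxWx n x α₁ (wh t) j * φ.eval ((x j.succ : ℝ) : ℂ)
          + fluxWx n x α₁ (wh t) (j - 1) * φ.eval ((x j.castSucc : ℝ) : ℂ)
          + fluxWtilde n x α₂ (wh t) j * φ.derivative.eval ((x j.succ : ℝ) : ℂ)
          - fluxWtilde n x α₂ (wh t) (j - 1) * φ.derivative.eval ((x j.castSucc : ℝ) : ℂ))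
    -- second DG scheme equation, on each cell, for every test polynomial ψ of degree ≤ q
    (scheme2 : ∀ t : ℝ, 0 ≤ t → ∀ j : Fin (n + 1), ∀ ψ : Polynomial ℂ, ψ.natDegree ≤ q →
      (∫ y in (x j.castSucc : ℝ)..(x j.succ : ℝ),
          (wh t j).eval ((y : ℝ) : ℂ) * ψ.eval ((y : ℝ) : ℂ)
            - (uh t j).eval ((y : ℝ) : ℂ) * (ψ.derivative.derivative).eval ((y : ℝ) : ℂ)) =
        fluxUx n x α₂ (uh t) j * ψ.eval ((x j.succ : ℝ) : ℂ)
          - fluxUx n x α₂ (uh t) (j - 1) * ψ.eval ((x j.castSucc : ℝ) : ℂ)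
          - fluxUhat n x α₁ (uh t) j * ψ.derivative.eval ((x j.succ : ℝ) : ℂ)
          + fluxUhat n x α₁ (uh t) (j - 1) * ψ.derivative.eval ((x j.castSucc : ℝ) : ℂ)) :
    -- conclusion: conservation of the discrete Hamiltonian
    -- H_h(t) = ∫_I (|w_h|² + F(|u_h|²)) dx
    ∀ t : ℝ, 0 ≤ t →
      (∑ j : Fin (n + 1), ∫ y in (x j.castSucc : ℝ)..(x j.succ : ℝ),
          (‖(wh t j).eval ((y : ℝ) : ℂ)‖ ^ 2
            + F (‖(uh t j).eval ((y : ℝ) : ℂ)‖ ^ 2))) =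
      ∑ j : Fin (n + 1), ∫ y in (x j.castSucc : ℝ)..(x j.succ : ℝ),
          (‖(wh 0 j).eval ((y : ℝ) : ℂ)‖ ^ 2
            + F (‖(uh 0 j).eval ((y : ℝ) : ℂ)‖ ^ 2)) := by
  intro t ht
  have hs2dot : ∀ s : ℝ, 0 ≤ s → ∀ j : Fin (n + 1), ∀ ψ : Polynomial ℂ, ψ.natDegree ≤ q →
      (∫ y in (x j.castSucc : ℝ)..(x j.succ : ℝ),
          (wht s j).eval ((y : ℝ) : ℂ) * ψ.eval ((y : ℝ) : ℂ)
            - (uht s j).eval ((y : ℝ) : ℂ) * (ψ.derivative.derivative).eval ((y : ℝ) : ℂ)) =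
        fluxUx n x α₂ (uht s) j * ψ.eval ((x j.succ : ℝ) : ℂ)
          - fluxUx n x α₂ (uht s) (j - 1) * ψ.eval ((x j.castSucc : ℝ) : ℂ)
          - fluxUhat n x α₁ (uht s) j * ψ.derivative.eval ((x j.succ : ℝ) : ℂ)
          + fluxUhat n x α₁ (uht s) (j - 1) * ψ.derivative.eval ((x j.castSucc : ℝ) : ℂ) :=
    fun s hs j ψ hψ => scheme2dot n q x α₁ α₂ uh wh uht wht hdegu hdegw hdegut hdegwt
      hderivu hderivw scheme2 s hs j ψ hψ
  have Dzero : ∀ s : ℝ, 0 ≤ s →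
      (∑ j : Fin (n + 1), ∫ y in (x j.castSucc : ℝ)..(x j.succ : ℝ),
        (2 * ((starRingEnd ℂ) ((wh s j).eval ((y:ℝ):ℂ)) * (wht s j).eval ((y:ℝ):ℂ)).re
          + F' (‖(uh s j).eval ((y:ℝ):ℂ)‖ ^ 2) *
            (2 * ((starRingEnd ℂ) ((uh s j).eval ((y:ℝ):ℂ))
              * (uht s j).eval ((y:ℝ):ℂ)).re))) = 0 :=
    fun s hs => Dzero n q x F' hF' α₁ α₂ uh wh uht wht hdegut hdegw scheme1 hs2dot s hs
  have hFc : ContinuousOn F (Set.Ici 0) := fun sξ hξ => (hFd sξ hξ).continuousWithinAt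
  have hd : ∀ j r y, dFun F' n uh wh uht wht j r y =
    2 * ((starRingEnd ℂ) ((wh r j).eval ((y:ℝ):ℂ)) * (wht r j).eval ((y:ℝ):ℂ)).re
      + F' (‖(uh r j).eval ((y:ℝ):ℂ)‖ ^ 2) *
        (2 * ((starRingEnd ℂ) ((uh r j).eval ((y:ℝ):ℂ))
          * (uht r j).eval ((y:ℝ):ℂ)).re) := fun j r y => rfl
  have hg : ∀ j r y, gFun F n uh wh j r y =
    ‖(wh r j).eval ((y:ℝ):ℂ)‖ ^ 2
      + F (‖(uh r j).eval ((y:ℝ):ℂ)‖ ^ 2) := fun j r y => rfl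
  -- joint continuity
  have hjc_u : ∀ j, ContinuousOn (fun z : ℝ×ℝ => (uh z.1 j).eval ((z.2:ℝ):ℂ))
      (Set.Ici 0 ×ˢ Set.univ) := fun j =>
    master_jointcont q _ (fun r hr => hdegu r hr j)
      (fun y r hr => (hderivu r hr j y).continuousWithinAt)
  have hjc_ut : ∀ j, ContinuousOn (fun z : ℝ×ℝ => (uht z.1 j).eval ((z.2:ℝ):ℂ))
      (Set.Ici 0 ×ˢ Set.univ) := fun j =>
    master_jointcont q _ (fun r hr => hdegut r hr j) (fun y => hcontu j y)
  have hjc_w : ∀ j, ContinuousOn (fun z : ℝ×ℝ => (wh z.1 j).eval ((z.2:ℝ):ℂ))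
      (Set.Ici 0 ×ˢ Set.univ) := fun j =>
    master_jointcont q _ (fun r hr => hdegw r hr j)
      (fun y r hr => (hderivw r hr j y).continuousWithinAt)
  have hjc_wt : ∀ j, ContinuousOn (fun z : ℝ×ℝ => (wht z.1 j).eval ((z.2:ℝ):ℂ))
      (Set.Ici 0 ×ˢ Set.univ) := fun j =>
    master_jointcont q _ (fun r hr => hdegwt r hr j) (fun y => hcontw j y)
  -- time derivative of g
  have hgd : ∀ j (y : ℝ) (r : ℝ), 0 ≤ r →
      HasDerivWithinAt (fun ρ => gFun F n uh wh j ρ y) (dFun F' n uh wh uht wht j r y) (Set.Ici 0) r := by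
    intro j y r hr
    simp only [hd, hg]
    have hw := normSq_hasDeriv (hderivw r hr j y)
    have hu := normSq_hasDeriv (hderivu r hr j y)
    have hFcomp : HasDerivWithinAt
        (fun ρ => F (‖(uh ρ j).eval ((y:ℝ):ℂ)‖ ^ 2))
        (F' (‖(uh r j).eval ((y:ℝ):ℂ)‖ ^ 2)
          * (2 * ((starRingEnd ℂ) ((uh r j).eval ((y:ℝ):ℂ))
            * (uht r j).eval ((y:ℝ):ℂ)).re)) (Set.Ici 0) r :=
      HasDerivWithinAt.comp r
        (hFd (‖(uh r j).eval ((y:ℝ):ℂ)‖ ^ 2) (Set.mem_Ici.2 (sq_nonneg _))) hu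
        (fun ρ _ => Set.mem_Ici.2 (sq_nonneg _))
    exact hw.add hFcomp
  -- joint continuity of d
  have hjd : ∀ j, ContinuousOn (fun z : ℝ×ℝ => dFun F' n uh wh uht wht j z.1 z.2)
      (Set.Ici 0 ×ˢ Set.univ) := by
    intro j
    simp only [hd]
    have habs2 : ContinuousOn (fun z : ℝ×ℝ =>
        ‖(uh z.1 j).eval ((z.2:ℝ):ℂ)‖ ^ 2) (Set.Ici 0 ×ˢ Set.univ) :=
      (continuous_norm.comp_continuousOn (hjc_u j)).pow 2
    have t1 : ContinuousOn (fun z : ℝ×ℝ =>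
        2 * ((starRingEnd ℂ) ((wh z.1 j).eval ((z.2:ℝ):ℂ))
          * (wht z.1 j).eval ((z.2:ℝ):ℂ)).re) (Set.Ici 0 ×ˢ Set.univ) :=
      continuousOn_const.mul (Complex.continuous_re.comp_continuousOn
        ((continuous_star.comp_continuousOn (hjc_w j)).mul (hjc_wt j)))
    have t2 : ContinuousOn (fun z : ℝ×ℝ =>
        F' (‖(uh z.1 j).eval ((z.2:ℝ):ℂ)‖ ^ 2)) (Set.Ici 0 ×ˢ Set.univ) :=
      hF'.comp habs2 (fun z _ => Set.mem_Ici.2 (sq_nonneg _))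
    have t3 : ContinuousOn (fun z : ℝ×ℝ =>
        2 * ((starRingEnd ℂ) ((uh z.1 j).eval ((z.2:ℝ):ℂ))
          * (uht z.1 j).eval ((z.2:ℝ):ℂ)).re) (Set.Ici 0 ×ˢ Set.univ) :=
      continuousOn_const.mul (Complex.continuous_re.comp_continuousOn
        ((continuous_star.comp_continuousOn (hjc_u j)).mul (hjc_ut j)))
    exact t1.add (t2.mul t3)
  -- FTC in time, pointwise in y
  have hftc : ∀ j (y : ℝ), gFun F n uh wh j t y - gFun F n uh wh j 0 y = ∫ r in (0:ℝ)..t, dFun F' n uh wh uht wht j r y := by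
    intro j y
    have hcg : ContinuousOn (fun ρ => gFun F n uh wh j ρ y) (Set.Icc 0 t) := fun ρ hρ =>
      ((hgd j y ρ hρ.1).continuousWithinAt).mono Set.Icc_subset_Ici_self
    have hmap : Continuous (fun r : ℝ => (r, y)) := continuous_id.prodMk continuous_const
    have hcd0 : ContinuousOn ((fun z : ℝ × ℝ => dFun F' n uh wh uht wht j z.1 z.2)
        ∘ (fun r : ℝ => (r, y))) (Set.Icc 0 t) :=
      ContinuousOn.comp (hjd j) hmap.continuousOn
        (fun r (hr : r ∈ Set.Icc 0 t) =>
          (⟨hr.1, Set.mem_univ _⟩ : (r, y) ∈ Set.Ici 0 ×ˢ Set.univ))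
    have hcd : ContinuousOn (fun r : ℝ => dFun F' n uh wh uht wht j r y)
        (Set.Icc 0 t) := by exact hcd0
    have hdint : IntervalIntegrable (fun r => dFun F' n uh wh uht wht j r y) volume 0 t := by
      apply ContinuousOn.intervalIntegrable
      rwa [Set.uIcc_of_le ht]
    have h := intervalIntegral.integral_eq_sub_of_hasDeriv_right_of_le ht hcg
      (fun ρ hρ => (hgd j y ρ hρ.1.le).mono
        (fun z hz => le_of_lt (lt_trans hρ.1 hz))) hdint
    linarith [h]
  -- Fubini
  have hab : ∀ j : Fin (n+1), (x j.castSucc : ℝ) ≤ (x j.succ : ℝ) :=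
    fun j => (hx (Fin.castSucc_lt_succ (i := j))).le
  have hprod : ∀ j, Integrable (fun z : ℝ × ℝ => dFun F' n uh wh uht wht j z.2 z.1)
      ((volume.restrict (Set.Ioc (x j.castSucc : ℝ) (x j.succ : ℝ))).prod
        (volume.restrict (Set.Ioc (0:ℝ) t))) := by
    intro j
    rw [Measure.prod_restrict]
    have hcont0 : ContinuousOn ((fun z : ℝ × ℝ => dFun F' n uh wh uht wht j z.1 z.2)
        ∘ Prod.swap)
        ((Set.Icc (x j.castSucc : ℝ) (x j.succ : ℝ)) ×ˢ (Set.Icc (0:ℝ) t)) :=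
      ContinuousOn.comp (hjd j) continuous_swap.continuousOn
        (fun z hz => (⟨hz.2.1, Set.mem_univ _⟩ : Prod.swap z ∈ Set.Ici 0 ×ˢ Set.univ))
    have hcont2 : ContinuousOn (fun z : ℝ × ℝ => dFun F' n uh wh uht wht j z.2 z.1)
        ((Set.Icc (x j.castSucc : ℝ) (x j.succ : ℝ)) ×ˢ (Set.Icc (0:ℝ) t)) := by
      exact hcont0
    exact (hcont2.integrableOn_compact (isCompact_Icc.prod isCompact_Icc)).mono_set
      (Set.prod_mono Set.Ioc_subset_Icc_self Set.Ioc_subset_Icc_self)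
  have hswap : ∀ j, (∫ y in (x j.castSucc : ℝ)..(x j.succ : ℝ), ∫ r in (0:ℝ)..t, dFun F' n uh wh uht wht j r y)
      = ∫ r in (0:ℝ)..t, ∫ y in (x j.castSucc : ℝ)..(x j.succ : ℝ), dFun F' n uh wh uht wht j r y := by
    intro j
    rw [intervalIntegral.integral_of_le (hab j), intervalIntegral.integral_of_le ht]
    simp_rw [intervalIntegral.integral_of_le ht, intervalIntegral.integral_of_le (hab j)]
    exact MeasureTheory.integral_integral_swap (hprod j)
  have hYint : ∀ j, IntervalIntegrable
      (fun r => ∫ y in (x j.castSucc : ℝ)..(x j.succ : ℝ), dFun F' n uh wh uht wht j r y) volume 0 t := by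
    intro j
    rw [intervalIntegrable_iff, Set.uIoc_of_le ht]
    have h1 : Integrable (fun z : ℝ × ℝ => dFun F' n uh wh uht wht j z.1 z.2)
        ((volume.restrict (Set.Ioc (0:ℝ) t)).prod
          (volume.restrict (Set.Ioc (x j.castSucc : ℝ) (x j.succ : ℝ)))) := by
      have := (hprod j).swap
      exact this
    have h2 := h1.integral_prod_left
    simp only at h2
    have : (fun r => ∫ y in (x j.castSucc : ℝ)..(x j.succ : ℝ), dFun F' n uh wh uht wht j r y)
        = fun r => ∫ y in Set.Ioc (x j.castSucc : ℝ) (x j.succ : ℝ), dFun F' n uh wh uht wht j r y := by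
      funext r; rw [intervalIntegral.integral_of_le (hab j)]
    rw [this]
    exact h2
  -- integrability of g in y
  have hgint : ∀ j (r : ℝ), 0 ≤ r → IntervalIntegrable (fun y => gFun F n uh wh j r y) volume
      (x j.castSucc : ℝ) (x j.succ : ℝ) := by
    intro j r hr
    apply Continuous.intervalIntegrable
    refine Continuous.add ((continuous_norm.comp (contEval _)).pow 2) ?_
    refine ContinuousOn.comp_continuous hFc
      ((continuous_norm.comp (contEval _)).pow 2) (fun y => Set.mem_Ici.2 (sq_nonneg _))
  -- final computation
  have key : (∑ j : Fin (n + 1), ∫ y in (x j.castSucc : ℝ)..(x j.succ : ℝ), gFun F n uh wh j t y)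
      - (∑ j : Fin (n + 1), ∫ y in (x j.castSucc : ℝ)..(x j.succ : ℝ), gFun F n uh wh j 0 y) = 0 := by
    rw [← Finset.sum_sub_distrib]
    rw [Finset.sum_congr rfl (fun j _ =>
      (intervalIntegral.integral_sub (hgint j t ht) (hgint j 0 le_rfl)).symm)]
    rw [Finset.sum_congr rfl (fun j _ =>
      (intervalIntegral.integral_congr (fun y _ => hftc j y) :
        (∫ y in (x j.castSucc : ℝ)..(x j.succ : ℝ), (gFun F n uh wh j t y - gFun F n uh wh j 0 y))
          = ∫ y in (x j.castSucc : ℝ)..(x j.succ : ℝ), ∫ r in (0:ℝ)..t, dFun F' n uh wh uht wht j r y))]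
    rw [Finset.sum_congr rfl (fun j _ => hswap j)]
    rw [← intervalIntegral.integral_finset_sum (fun j _ => hYint j)]
    rw [intervalIntegral.integral_congr (g := fun _ => (0:ℝ))
      (fun r hr => by
        rw [Set.uIcc_of_le ht] at hr
        have h0 := Dzero r hr.1
        have hconv : (∑ j : Fin (n + 1),
            ∫ y in (x j.castSucc : ℝ)..(x j.succ : ℝ), dFun F' n uh wh uht wht j r y)
            = ∑ j : Fin (n + 1), ∫ y in (x j.castSucc : ℝ)..(x j.succ : ℝ),
              (2 * ((starRingEnd ℂ) ((wh r j).eval ((y:ℝ):ℂ))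
                  * (wht r j).eval ((y:ℝ):ℂ)).re
                + F' (‖(uh r j).eval ((y:ℝ):ℂ)‖ ^ 2) *
                  (2 * ((starRingEnd ℂ) ((uh r j).eval ((y:ℝ):ℂ))
                    * (uht r j).eval ((y:ℝ):ℂ)).re)) :=
          Finset.sum_congr rfl fun j _ =>
            intervalIntegral.integral_congr fun y _ => hd j r y
        rw [hconv]
        exact h0)]
    simp
  have hgoal : (∑ j : Fin (n + 1), ∫ y in (x j.castSucc : ℝ)..(x j.succ : ℝ), gFun F n uh wh j t y)
      = ∑ j : Fin (n + 1), ∫ y in (x j.castSucc : ℝ)..(x j.succ : ℝ), gFun F n uh wh j 0 y :=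
    sub_eq_zero.mp key
  have conv1 : ∀ r : ℝ, (∑ j : Fin (n + 1),
      ∫ y in (x j.castSucc : ℝ)..(x j.succ : ℝ), gFun F n uh wh j r y)
      = ∑ j : Fin (n + 1), ∫ y in (x j.castSucc : ℝ)..(x j.succ : ℝ),
        (‖(wh r j).eval ((y : ℝ) : ℂ)‖ ^ 2
          + F (‖(uh r j).eval ((y : ℝ) : ℂ)‖ ^ 2)) := by
    intro r
    refine Finset.sum_congr rfl fun j _ => ?_
    exact intervalIntegral.integral_congr fun y _ => hg j r y
  rw [← conv1 t, ← conv1 0]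
  exact hgoal

end
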